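/- In MvPolynomial ℝ (ℕ ⊕ ℕ), assign to the variable X (Sum.inl i) the weight i + 1 and to X (Sum.inr i) the weight −(i + 1) (a weight function w : ℕ ⊕ ℕ → ℤ), and set f_k = Σ_{i < k} X (Sum.inl i) * X (Sum.inr i). Let I be the ideal generated by all the variables, and for p : ℕ let F p be the ideal generated by the set of polynomials that are weighted homogeneous of some degree m ≥ p with respect to w. Then: (a) the sequence (f_k) is Cauchy with respect to the filtration (F p), i.e. for every p there exists N such that f_k − f_j ∈ F p for all j, k ≥ N; and (b) (f_k) is not Cauchy with respect to the filtration (I^l), because f_{k+1} − f_k = X (Sum.inl k) * X (Sum.inr k) ∉ I^3 for every k. -/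

import Mathlib

open MvPolynomial

private lemma coeff_zero_of_mem_pow_span
    (n : ℕ) (x : MvPolynomial (ℕ ⊕ ℕ) ℝ)
    (hx : x ∈ (Ideal.span (Set.range (MvPolynomial.X : ℕ ⊕ ℕ → MvPolynomial (ℕ ⊕ ℕ) ℝ))) ^ n)
    (d : (ℕ ⊕ ℕ) →₀ ℕ) (hd : (d.sum fun _ e => e) < n) :
    MvPolynomial.coeff d x = 0 := by
  induction n generalizing x d with
  | zero => omega
  | succ n ih =>
      rw [pow_succ'] at hx
      refine Submodule.mul_induction_on hx ?_ ?_
      · intro a ha b hb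
        have ha0 : MvPolynomial.coeff 0 a = 0 := by
          have : a ∈ RingHom.ker (MvPolynomial.constantCoeff (σ := ℕ ⊕ ℕ) (R := ℝ)) := by
            refine Ideal.span_le.mpr ?_ ha
            rintro _ ⟨i, rfl⟩
            simp [RingHom.mem_ker]
          simpa [RingHom.mem_ker, MvPolynomial.constantCoeff_eq] using this
        rw [MvPolynomial.coeff_mul]
        refine Finset.sum_eq_zero ?_
        rintro ⟨u, v⟩ huv
        rw [Finset.HasAntidiagonal.mem_antidiagonal] at huv
        by_cases hu : u = 0
        · simp [hu, ha0]
        · have hvd : (v.sum fun _ e => e) < n := by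
            have hsum : (d.sum fun _ e => e) = (u.sum fun _ e => e) + (v.sum fun _ e => e) := by
              rw [← huv]; exact Finsupp.sum_add_index' (fun _ => rfl) (fun _ _ _ => rfl)
            have hu1 : 1 ≤ u.sum fun _ e => e := by
              rcases Finsupp.ne_iff.mp hu with ⟨i, hi⟩
              simp only [Finsupp.coe_zero, Pi.zero_apply] at hi
              calc 1 ≤ u i := Nat.one_le_iff_ne_zero.mpr hi
                _ ≤ u.sum fun _ e => e :=
                  Finset.single_le_sum (fun _ _ => Nat.zero_le _)
                    (Finsupp.mem_support_iff.mpr hi)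
            omega
          simp [ih b hb v hvd]
      · intro a b ha hb
        simp [MvPolynomial.coeff_add, ha, hb]

theorem stmt_13
    (w : ℕ ⊕ ℕ → ℤ)
    (hwdef : w = Sum.elim (fun i : ℕ => (i : ℤ) + 1) (fun i : ℕ => -((i : ℤ) + 1)))
    (f : ℕ → MvPolynomial (ℕ ⊕ ℕ) ℝ)
    (hf : ∀ k, f k = ∑ i ∈ Finset.range k,
      MvPolynomial.X (Sum.inl i) * MvPolynomial.X (Sum.inr i))
    (I : Ideal (MvPolynomial (ℕ ⊕ ℕ) ℝ))
    (hI : I = Ideal.span (Set.range (MvPolynomial.X : ℕ ⊕ ℕ → MvPolynomial (ℕ ⊕ ℕ) ℝ)))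
    (F : ℕ → Ideal (MvPolynomial (ℕ ⊕ ℕ) ℝ))
    (hF : ∀ p : ℕ, F p = Ideal.span
      {g : MvPolynomial (ℕ ⊕ ℕ) ℝ |
        ∃ m : ℤ, (p : ℤ) ≤ m ∧ MvPolynomial.IsWeightedHomogeneous w g m}) :
    (∀ p : ℕ, ∃ N : ℕ, ∀ j k : ℕ, N ≤ j → N ≤ k → f k - f j ∈ F p) ∧
    (∀ k : ℕ,
      f (k + 1) - f k = MvPolynomial.X (Sum.inl k) * MvPolynomial.X (Sum.inr k) ∧
      MvPolynomial.X (Sum.inl k) * MvPolynomial.X (Sum.inr k) ∉ I ^ 3) := by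
  have hXmem : ∀ p i : ℕ, p ≤ i →
      MvPolynomial.X (Sum.inl i) * MvPolynomial.X (Sum.inr i) ∈ F p := by
    intro p i hpi
    rw [hF]
    refine Ideal.mul_mem_right _ _ (Ideal.subset_span ?_)
    refine ⟨(i : ℤ) + 1, by exact_mod_cast by omega, ?_⟩
    have := MvPolynomial.isWeightedHomogeneous_X ℝ w (Sum.inl i)
    rwa [hwdef] at this ⊢
  have hsub : ∀ j k : ℕ, j ≤ k → f k - f j =
      ∑ i ∈ Finset.Ico j k, MvPolynomial.X (Sum.inl i) * MvPolynomial.X (Sum.inr i) := by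
    intro j k hjk
    rw [hf, hf, eq_comm]
    exact Finset.sum_Ico_eq_sub _ hjk
  constructor
  · intro p
    refine ⟨p, ?_⟩
    have key : ∀ j k : ℕ, p ≤ j → j ≤ k → f k - f j ∈ F p := by
      intro j k hpj hjk
      rw [hsub j k hjk]
      refine Submodule.sum_mem _ ?_
      intro i hi
      rw [Finset.mem_Ico] at hi
      exact hXmem p i (le_trans hpj hi.1)
    intro j k hpj hpk
    rcases le_total j k with h | h
    · exact key j k hpj h
    · have := key k j hpk h
      simpa using Submodule.neg_mem _ this
  · intro k
    constructor
    · rw [hf, hf, Finset.sum_range_succ, add_sub_cancel_left]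
    · intro hmem
      rw [hI] at hmem
      set d : (ℕ ⊕ ℕ) →₀ ℕ :=
        Finsupp.single (Sum.inl k) 1 + Finsupp.single (Sum.inr k) 1 with hdd
      have hds : (d.sum fun _ e => e) = 2 := by
        rw [hdd, Finsupp.sum_add_index' (fun _ => rfl) (fun _ _ _ => rfl),
          Finsupp.sum_single_index rfl, Finsupp.sum_single_index rfl]
      have h0 := coeff_zero_of_mem_pow_span 3 _ hmem d (by omega)
      have hx : (MvPolynomial.X (Sum.inl k) * MvPolynomial.X (Sum.inr k)
          : MvPolynomial (ℕ ⊕ ℕ) ℝ) = MvPolynomial.monomial d 1 := by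
        rw [hdd, MvPolynomial.X, MvPolynomial.X, MvPolynomial.monomial_mul, one_mul]
      rw [hx, MvPolynomial.coeff_monomial, if_pos rfl] at h0
      exact one_ne_zero h0
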